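/- Let α be a linearly ordered type, let s be a multiset over α, and let g be a permutation of α. Then sort(map g s) ≤lex map g (sort s), where sort t denotes the nondecreasing sorted list of the elements of the multiset t, and map g applies g to every element. -/

import Mathlib

theorem sorted_lex_of_perm {α : Type*} [LinearOrder α] :
    ∀ {l l' : List α}, l.Pairwise (· ≤ ·) → l.Perm l' →
      l = l' ∨ List.Lex (· < ·) l l' := by
  intro l
  induction l with
  | nil => intro l' _ hp; left; exact (hp.nil_eq).symm ▸ rfl
  | cons a t ih =>
    intro l' hs hp
    cases l' with
    | nil => exact absurd hp.symm.nil_eq (by simp)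
    | cons b t' =>
      have hb : b ∈ a :: t := hp.symm.subset (List.mem_cons_self)
      have hab : a ≤ b := by
        rcases List.mem_cons.mp hb with h | h
        · exact le_of_eq h.symm
        · exact (List.pairwise_cons.mp hs).1 b h
      rcases lt_or_eq_of_le hab with h | h
      · exact Or.inr (List.Lex.rel h)
      · subst h
        have hp' : t.Perm t' := hp.cons_inv
        rcases ih (List.pairwise_cons.mp hs).2 hp' with h | h
        · left; rw [h]
        · exact Or.inr (List.Lex.cons h)

/-- Lemma 2(1): the explicit representation of a multiset satisfies
`φ(x^g) ≤lex φ(x)^g`: sorting the image of a multiset under a permutation is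
lexicographically at most applying the permutation to the sorted list. -/
theorem sort_map_lex_map_sort {α : Type*} [LinearOrder α]
    (s : Multiset α) (g : Equiv.Perm α) :
    (s.map g).sort (· ≤ ·) = (s.sort (· ≤ ·)).map g ∨
      List.Lex (· < ·) ((s.map g).sort (· ≤ ·)) ((s.sort (· ≤ ·)).map g) := by
  apply sorted_lex_of_perm (Multiset.pairwise_sort _ _)
  have : ((s.sort (· ≤ ·)).map g : Multiset α) = s.map g := by
    rw [← Multiset.map_coe, Multiset.sort_eq]
  exact Quotient.exact ((Multiset.sort_eq _ _).trans this.symm)
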